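/- arXiv:1511.07400 — 6 statements merged into one kernel-verified Lean document; each statement's English description precedes it below -/
import Mathlib

section
/- Fix λ > 0 with (1+λ)/(1+λ²) < 1 (i.e., λ > 1). Let F : ℝ² → ℝ² be bounded by K₀ and Lipschitz with constant K_x, let R be the rotation R(w₁,w₂) = (w₂,-w₁), and define sequences by z^{n+1} = [Id - λR]⁻¹(z^n - (F(x^n) - F(x^{n-1}))), x^n = x^{n-1} + Δt F(x^{n-1}) + Δt z^n. Assume (1+λ)/(1+λ²)(1 + K_x Δt) ≤ θ < 1. Then for all n ≥ 1, ‖z^n‖ ≤ a + θ^{n-1} b where a = ((1+λ)/(1+λ²)) K_x K₀ Δt /(1 - θ) ⋅ C and b = a + ((1+λ)/(1+λ²))‖z^1_{pre}‖, with z^1 = [Id-λR]⁻¹ z^1_{pre}; in particular ‖z^n‖ ≤ C'(Δt/λ)(1 + ‖z^1_{pre}‖) + θ^{n-1}‖z^1_{pre}‖ for some constant C' depending only on K₀, K_x. -/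
/-- The planar rotation by -90°: `(w₁, w₂) ↦ (w₂, -w₁)`. -/
noncomputable def Rrot (w : ℂ) : ℂ := -Complex.I * w

lemma key_rot (lam : ℝ) (hlam : 0 < lam) (zz w : ℂ)
    (h : zz - lam • Rrot zz = w) :
    ‖zz‖ ≤ (1 + lam) / (1 + lam ^ 2) * ‖w‖ := by
  have hw : w = (1 + (lam : ℂ) * Complex.I) * zz := by
    rw [← h]
    simp only [Rrot, Complex.real_smul]
    ring
  have hnorm : ‖w‖ = Real.sqrt (1 + lam ^ 2) * ‖zz‖ := by
    rw [hw, norm_mul]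
    congr 1
    rw [Complex.norm_def, Complex.normSq_apply]
    simp [Complex.add_re, Complex.add_im, Complex.mul_re, Complex.mul_im]
    ring_nf
  have hs : Real.sqrt (1 + lam ^ 2) ≤ 1 + lam := by
    rw [show (1:ℝ) + lam = Real.sqrt ((1+lam)^2) by
      rw [Real.sqrt_sq (by positivity)]]
    apply Real.sqrt_le_sqrt
    nlinarith
  have hspos : 0 < Real.sqrt (1 + lam ^ 2) := Real.sqrt_pos.2 (by positivity)
  have hsl : 1 + lam ^ 2 ≤ (1 + lam) * Real.sqrt (1 + lam ^ 2) := by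
    have := Real.sq_sqrt (show (0:ℝ) ≤ 1 + lam ^ 2 by positivity)
    nlinarith [hspos]
  rw [hnorm]
  rw [div_mul_eq_mul_div, le_div_iff₀ (by positivity)]
  have hz0 : (0:ℝ) ≤ ‖zz‖ := norm_nonneg _
  nlinarith [mul_le_mul_of_nonneg_left hsl hz0]

set_option maxHeartbeats 1000000 in
/-- Bound on the auxiliary variable `z^n` for the first-order semi-implicit
scheme with a time-independent bounded Lipschitz drift `F`: if
`((1+λ)/(1+λ²))(1 + K_x Δt) ≤ θ < 1`, then
`‖z^n‖ ≤ a + θ^{n-1} b` where `a = ((1+λ)/(1+λ²)) K_x K₀ Δt/(1-θ)` and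
`b = a + ((1+λ)/(1+λ²))‖z¹_pre‖`; in particular
`‖z^n‖ ≤ C'(Δt/λ)(1 + ‖z¹_pre‖) + θ^{n-1}‖z¹_pre‖` for some `C' > 0`. -/
theorem stmt6 (lam Δt K₀ Kx θ : ℝ) (hlam : 1 < lam) (hΔt : 0 < Δt)
    (hK₀ : 0 ≤ K₀) (hKx : 0 < Kx)
    (F : ℂ → ℂ) (hFbound : ∀ x : ℂ, ‖F x‖ ≤ K₀)
    (hFlip : ∀ x y : ℂ, ‖F x - F y‖ ≤ Kx * ‖x - y‖)
    (hθ : (1 + lam) / (1 + lam ^ 2) * (1 + Kx * Δt) ≤ θ) (hθ1 : θ < 1)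
    (x z : ℕ → ℂ) (z1pre : ℂ)
    (hx : ∀ n : ℕ, 1 ≤ n → x n = x (n - 1) + Δt • F (x (n - 1)) + Δt • z n)
    (hz1 : z 1 - lam • Rrot (z 1) = z1pre)
    (hz : ∀ n : ℕ, 1 ≤ n →
      z (n + 1) - lam • Rrot (z (n + 1)) = z n - (F (x n) - F (x (n - 1)))) :
    (∀ n : ℕ, 1 ≤ n →
      ‖z n‖ ≤ ((1 + lam) / (1 + lam ^ 2)) * Kx * K₀ * Δt / (1 - θ)
        + θ ^ (n - 1) * (((1 + lam) / (1 + lam ^ 2)) * Kx * K₀ * Δt / (1 - θ)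
            + ((1 + lam) / (1 + lam ^ 2)) * ‖z1pre‖)) ∧
    (∃ C' : ℝ, 0 < C' ∧ ∀ n : ℕ, 1 ≤ n →
      ‖z n‖ ≤ C' * (Δt / lam) * (1 + ‖z1pre‖) + θ ^ (n - 1) * ‖z1pre‖) := by
  have hlam0 : 0 < lam := by linarith
  set μ := (1 + lam) / (1 + lam ^ 2) with hμ
  clear_value μ
  have hμpos : 0 < μ := by rw [hμ]; positivity
  have hθpos : 0 < θ := by nlinarith [mul_pos hμpos (show (0:ℝ) < 1 + Kx * Δt by positivity)]
  have hprod : (0:ℝ) ≤ μ * Kx * K₀ * Δt :=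
    mul_nonneg (mul_nonneg (mul_nonneg hμpos.le hKx.le) hK₀) hΔt.le
  set a := μ * Kx * K₀ * Δt / (1 - θ) with ha
  clear_value a
  have hapos : 0 ≤ a := by
    rw [ha]
    exact div_nonneg hprod (by linarith)
  set b := a + μ * ‖z1pre‖ with hb
  clear_value b
  have hbpos : 0 ≤ b := by
    rw [hb]
    nlinarith [norm_nonneg z1pre, mul_nonneg hμpos.le (norm_nonneg z1pre)]
  set c := μ * Kx * K₀ * Δt with hc
  clear_value c
  have hcpos : 0 ≤ c := hc ▸ hprod
  have h1θ0 : (0:ℝ) < 1 - θ := by linarith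
  have hμ1 : μ ≤ 1 := by
    rw [hμ, div_le_one (by positivity)]
    nlinarith [sq_nonneg lam]
  have hμlam : μ * lam ≤ 2 := by
    rw [hμ, div_mul_eq_mul_div, div_le_iff₀ (by positivity)]
    nlinarith [sq_nonneg (lam - 1)]
  have hD : (0:ℝ) < Δt / lam := by positivity
  have hμΔ : μ * Δt ≤ 2 * (Δt / lam) := by
    rw [mul_comm (2:ℝ) (Δt / lam), div_mul_eq_mul_div, le_div_iff₀ hlam0]
    nlinarith [mul_le_mul_of_nonneg_right hμlam hΔt.le]
  have hC'pos : 0 < 4 * Kx * K₀ / (1 - θ) + 1 := by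
    have := div_nonneg (show (0:ℝ) ≤ 4 * Kx * K₀ by positivity) h1θ0.le
    linarith
  have h2a : 2 * a ≤ (4 * Kx * K₀ / (1 - θ) + 1) * (Δt / lam) := by
    have hnum : c ≤ 2 * Kx * K₀ * (Δt / lam) := by
      rw [hc]
      nlinarith [mul_le_mul_of_nonneg_right hμΔ (mul_nonneg hKx.le hK₀)]
    have h1 : a ≤ 2 * Kx * K₀ * (Δt / lam) / (1 - θ) := by
      rw [ha]
      exact (div_le_div_iff_of_pos_right h1θ0).mpr hnum
    have h2 : 2 * (2 * Kx * K₀ * (Δt / lam) / (1 - θ))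
        = (4 * Kx * K₀ / (1 - θ)) * (Δt / lam) := by ring
    have h3 : (4 * Kx * K₀ / (1 - θ)) * (Δt / lam)
        ≤ (4 * Kx * K₀ / (1 - θ) + 1) * (Δt / lam) := by nlinarith [hD]
    linarith
  -- bound on z 1
  have hz1' : ‖z 1‖ ≤ μ * ‖z1pre‖ := by
    rw [hμ]; exact key_rot lam hlam0 _ _ hz1
  -- step bound
  have hstep : ∀ n : ℕ, 1 ≤ n → ‖z (n + 1)‖ ≤ θ * ‖z n‖ + c := by
    intro n hn
    have h1 : ‖z (n+1)‖ ≤ μ * ‖z n - (F (x n) - F (x (n-1)))‖ := by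
      rw [hμ]; exact key_rot lam hlam0 _ _ (hz n hn)
    have hxd : ‖x n - x (n-1)‖ ≤ Δt * (K₀ + ‖z n‖) := by
      have := hx n hn
      rw [this]
      have : x (n-1) + Δt • F (x (n-1)) + Δt • z n - x (n-1)
          = Δt • F (x (n-1)) + Δt • z n := by ring
      rw [this]
      calc ‖Δt • F (x (n-1)) + Δt • z n‖
          ≤ ‖Δt • F (x (n-1))‖ + ‖Δt • z n‖ := norm_add_le _ _
        _ ≤ Δt * K₀ + Δt * ‖z n‖ := by
            rw [norm_smul, norm_smul, Real.norm_eq_abs, abs_of_pos hΔt]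
            have := hFbound (x (n-1))
            nlinarith
        _ = Δt * (K₀ + ‖z n‖) := by ring
    have h2 : ‖z n - (F (x n) - F (x (n-1)))‖ ≤ ‖z n‖ + Kx * (Δt * (K₀ + ‖z n‖)) := by
      calc ‖z n - (F (x n) - F (x (n-1)))‖
          ≤ ‖z n‖ + ‖F (x n) - F (x (n-1))‖ := norm_sub_le _ _
        _ ≤ ‖z n‖ + Kx * ‖x n - x (n-1)‖ := by linarith [hFlip (x n) (x (n-1))]
        _ ≤ ‖z n‖ + Kx * (Δt * (K₀ + ‖z n‖)) := by
            have := mul_le_mul_of_nonneg_left hxd hKx.le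
            linarith
    have h3 : μ * ‖z n - (F (x n) - F (x (n-1)))‖
        ≤ μ * (1 + Kx * Δt) * ‖z n‖ + c := by
      have h5 := mul_le_mul_of_nonneg_left h2 hμpos.le
      have h6 : μ * (‖z n‖ + Kx * (Δt * (K₀ + ‖z n‖)))
          = μ * (1 + Kx * Δt) * ‖z n‖ + μ * Kx * K₀ * Δt := by ring
      rw [hc]
      linarith
    have h4 : μ * (1 + Kx * Δt) * ‖z n‖ ≤ θ * ‖z n‖ :=
      mul_le_mul_of_nonneg_right hθ (norm_nonneg _)
    linarith
  have main : ∀ n : ℕ, 1 ≤ n → ‖z n‖ ≤ a + θ ^ (n - 1) * b := by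
    intro n hn
    induction n, hn using Nat.le_induction with
    | base =>
      simp only [Nat.sub_self, pow_zero, one_mul]
      linarith
    | succ n hn ih =>
      have hpow : (n + 1 - 1) = n := by omega
      rw [hpow]
      have hn1 : θ ^ n = θ * θ ^ (n - 1) := by
        rw [← pow_succ']
        congr 1
        omega
      have h1 := hstep n hn
      have h2 : θ * ‖z n‖ ≤ θ * (a + θ ^ (n-1) * b) :=
        mul_le_mul_of_nonneg_left ih hθpos.le
      have h1θ : (1:ℝ) - θ ≠ 0 := by linarith
      have haeq : θ * a + c = a := by
        rw [ha, hc]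
        field_simp
        ring
      rw [hn1]
      have h7 : θ * (a + θ ^ (n-1) * b) = θ * a + θ * θ ^ (n-1) * b := by ring
      have h8 : θ * θ ^ (n - 1) * b = θ * (θ ^ (n - 1) * b) := by ring
      linarith
  refine ⟨main, ?_⟩
  -- second part
  refine ⟨4 * Kx * K₀ / (1 - θ) + 1, hC'pos, ?_⟩
  intro n hn
  have hmain := main n hn
  clear main hstep hz1' hx hz hFbound hFlip hz1 F x
  have hpowle : θ ^ (n - 1) ≤ 1 := pow_le_one₀ hθpos.le hθ1.le
  have hpownn : 0 ≤ θ ^ (n - 1) := by positivity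
  have hsplit : θ ^ (n-1) * b ≤ a + θ ^ (n-1) * ‖z1pre‖ := by
    rw [hb]
    have h1 : θ ^ (n-1) * a ≤ a := by
      have := mul_le_mul_of_nonneg_right hpowle hapos
      linarith only [this]
    have h2 : θ ^ (n-1) * (μ * ‖z1pre‖) ≤ θ ^ (n-1) * ‖z1pre‖ := by
      apply mul_le_mul_of_nonneg_left ?_ hpownn
      have := mul_le_mul_of_nonneg_right hμ1 (norm_nonneg z1pre)
      linarith only [this]
    have hexp : θ ^ (n-1) * (a + μ * ‖z1pre‖)
        = θ ^ (n-1) * a + θ ^ (n-1) * (μ * ‖z1pre‖) := by ring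
    linarith only [h1, h2, hexp]
  have hfin : (4 * Kx * K₀ / (1 - θ) + 1) * (Δt / lam)
      ≤ (4 * Kx * K₀ / (1 - θ) + 1) * (Δt / lam) * (1 + ‖z1pre‖) := by
    have hx1 : (0:ℝ) < (4 * Kx * K₀ / (1 - θ) + 1) * (Δt / lam) :=
      mul_pos hC'pos hD
    have := mul_le_mul_of_nonneg_left
      (show (1:ℝ) ≤ 1 + ‖z1pre‖ by linarith only [norm_nonneg z1pre]) hx1.le
    linarith only [this]
  linarith only [hmain, hsplit, h2a, hfin]
end

section
/- (Uniform consistency, autonomous case.) Let F : ℝ² → ℝ² be bounded (by K₀) and Lipschitz (constant K_x > 0), R the −90° rotation, λ = Δt/ε², and define (x^n, z^n) by x^n = x^{n-1} + Δt F(x^{n-1}) + Δt z^n, z^1 = [Id−λR]⁻¹(w^0 − F(x^0)), z^{n+1} = [Id−λR]⁻¹(z^n − (F(x^n) − F(x^{n-1}))), and the limit scheme y^{n+1} = y^n + Δt F(y^n), y^0 = x^0. Then for every 0 ≤ θ < 1 there is a constant C_θ (depending only on θ, K₀, K_x) such that whenever ((1+λ)/(1+λ²))(1 + K_x Δt) ≤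 θ, one has for all n: ‖x^n − y^n‖ ≤ C_θ (Δt/λ)(K₀ + ‖w^0 − F(x^0)‖) e^{K_x n Δt}. -/
set_option maxHeartbeats 1000000


/-- Uniform consistency of the first-order semi-implicit scheme (autonomous,
constant magnetic field case of Theorem 4.1): for every `0 ≤ θ < 1` there is
`C_θ` (depending only on `θ, K₀, K_x`) such that whenever
`((1+λ)/(1+λ²))(1 + K_x Δt) ≤ θ`, the scheme iterates `x^n` and the forward
Euler iterates `y^n` of the guiding-center equation satisfy
`‖x^n − y^n‖ ≤ C_θ (Δt/λ)(K₀ + ‖w⁰ − F(x⁰)‖) e^{K_x n Δt}`. -/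
theorem stmt7 (K₀ Kx : ℝ) (hK₀ : 0 ≤ K₀) (hKx : 0 < Kx)
    (F : ℂ → ℂ) (hFbound : ∀ x : ℂ, ‖F x‖ ≤ K₀)
    (hFlip : ∀ x y : ℂ, ‖F x - F y‖ ≤ Kx * ‖x - y‖) :
    ∀ θ : ℝ, 0 ≤ θ → θ < 1 →
    ∃ C : ℝ, 0 < C ∧
      ∀ (lam Δt : ℝ), 0 < lam → 0 < Δt →
      ∀ (x z y : ℕ → ℂ) (w0 : ℂ),
        (∀ n : ℕ, 1 ≤ n → x n = x (n - 1) + Δt • F (x (n - 1)) + Δt • z n) →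
        (z 1 - lam • Rrot (z 1) = w0 - F (x 0)) →
        (∀ n : ℕ, 1 ≤ n →
          z (n + 1) - lam • Rrot (z (n + 1)) = z n - (F (x n) - F (x (n - 1)))) →
        (y 0 = x 0) →
        (∀ n : ℕ, y (n + 1) = y n + Δt • F (y n)) →
        (1 + lam) / (1 + lam ^ 2) * (1 + Kx * Δt) ≤ θ →
        ∀ n : ℕ, ‖x n - y n‖
          ≤ C * (Δt / lam) * (K₀ + ‖w0 - F (x 0)‖) * Real.exp (Kx * n * Δt) := by

  intro θ hθ0 hθ1
  have h1θ : 0 < 1 - θ := by linarith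
  refine ⟨1 / (1 - θ), by positivity, ?_⟩
  intro lam Δt hlam hΔt x z y w0 hx hz1 hzrec hy0 hyrec hcond n
  set D := ‖w0 - F (x 0)‖ with hD
  have hD0 : 0 ≤ D := norm_nonneg _
  set ν : ℝ := ‖(1 + (lam : ℂ) * Complex.I)‖ with hνdef
  have hν0 : 0 ≤ ν := norm_nonneg _
  have hν2 : ν ^ 2 = 1 + lam ^ 2 := by
    rw [hνdef, Complex.sq_norm, Complex.normSq_apply]
    simp
    ring
  have hν1 : 1 ≤ ν := by nlinarith [sq_nonneg lam, sq_nonneg (ν - 1)]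
  have hνpos : 0 < ν := by linarith
  have hνlam : lam ≤ ν := by nlinarith
  have hνle : ν ≤ 1 + lam := by nlinarith
  -- key contraction bound
  have key : 1 + Kx * Δt ≤ θ * ν := by
    have hpos : (0:ℝ) < 1 + lam ^ 2 := by positivity
    have hA : (1 + lam) * (1 + Kx * Δt) ≤ θ * (1 + lam ^ 2) := by
      have h1 : (1 + lam) / (1 + lam ^ 2) * (1 + Kx * Δt) * (1 + lam ^ 2)
          ≤ θ * (1 + lam ^ 2) := by
        exact mul_le_mul_of_nonneg_right hcond hpos.le
      calc (1 + lam) * (1 + Kx * Δt)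
          = (1 + lam) / (1 + lam ^ 2) * (1 + Kx * Δt) * (1 + lam ^ 2) := by
            field_simp
        _ ≤ θ * (1 + lam ^ 2) := h1
    nlinarith [mul_le_mul_of_nonneg_left hνle (mul_nonneg hθ0 hν0)]
  -- the resolvent identity
  have hmul : ∀ u w : ℂ, u - lam • Rrot u = w → ‖u‖ * ν = ‖w‖ := by
    intro u w h
    have h2 : u * (1 + (lam : ℂ) * Complex.I) = w := by
      rw [← h]
      simp only [Rrot, Complex.real_smul]
      ring
    rw [← h2, norm_mul]
  set B := Kx * Δt * K₀ / (1 - θ) with hBdef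
  have hB0 : 0 ≤ B := by positivity
  have hBe : B * (1 - θ) = Kx * Δt * K₀ := by
    rw [hBdef]; field_simp
  -- bound on z
  have hz : ∀ k : ℕ, ‖z (k + 1)‖ * ν ≤ θ ^ k * D + B := by
    intro k
    induction k with
    | zero =>
      have h1 := hmul _ _ hz1
      simp only [pow_zero, one_mul]
      rw [h1, ← hD]
      linarith
    | succ k ih =>
      have hrec := hmul _ _ (hzrec (k + 1) (Nat.le_add_left 1 k))
      simp only [Nat.add_sub_cancel] at hrec
      have hx' := hx (k + 1) (Nat.le_add_left 1 k)
      simp only [Nat.add_sub_cancel] at hx'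
      have hxd : x (k + 1) - x k = Δt • F (x k) + Δt • z (k + 1) := by
        rw [hx']; abel
      have hxn : ‖x (k + 1) - x k‖ ≤ Δt * K₀ + Δt * ‖z (k + 1)‖ := by
        rw [hxd]
        calc ‖Δt • F (x k) + Δt • z (k + 1)‖
            ≤ ‖Δt • F (x k)‖ + ‖Δt • z (k + 1)‖ := norm_add_le _ _
          _ = Δt * ‖F (x k)‖ + Δt * ‖z (k + 1)‖ := by
              rw [norm_smul, norm_smul, Real.norm_eq_abs, abs_of_pos hΔt]
          _ ≤ Δt * K₀ + Δt * ‖z (k + 1)‖ := by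
              have := hFbound (x k)
              nlinarith
      have step1 : ‖z (k + 1 + 1)‖ * ν
          ≤ (1 + Kx * Δt) * ‖z (k + 1)‖ + Kx * Δt * K₀ := by
        have h3 : ‖z (k + 1) - (F (x (k + 1)) - F (x k))‖
            ≤ ‖z (k + 1)‖ + Kx * ‖x (k + 1) - x k‖ := by
          have := norm_sub_le (z (k + 1)) (F (x (k + 1)) - F (x k))
          have := hFlip (x (k + 1)) (x k)
          linarith
        have h4 : Kx * ‖x (k + 1) - x k‖ ≤ Kx * (Δt * K₀ + Δt * ‖z (k + 1)‖) :=
          mul_le_mul_of_nonneg_left hxn hKx.le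
        rw [hrec]
        nlinarith
      have h5 : (1 + Kx * Δt) * ‖z (k + 1)‖ ≤ θ * (θ ^ k * D + B) := by
        have hzn0 : 0 ≤ ‖z (k + 1)‖ := norm_nonneg _
        have h6 : (1 + Kx * Δt) * ‖z (k + 1)‖ ≤ θ * ν * ‖z (k + 1)‖ :=
          mul_le_mul_of_nonneg_right key hzn0
        have h7 : θ * (‖z (k + 1)‖ * ν) ≤ θ * (θ ^ k * D + B) :=
          mul_le_mul_of_nonneg_left ih hθ0
        nlinarith
      have hps : θ ^ (k + 1) = θ * θ ^ k := by rw [pow_succ]; ring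
      rw [hps]
      have h8 : θ * (θ ^ k * D + B) = θ * θ ^ k * D + θ * B := by ring
      linarith
  -- error recursion
  set q := 1 + Kx * Δt with hq
  have hq1 : 1 ≤ q := by
    rw [hq]
    have := mul_pos hKx hΔt
    linarith
  have hq0 : 0 ≤ q := by linarith
  have hqθ : 0 < q - θ := by linarith
  have herr : ∀ m : ℕ, ‖x m - y m‖
      ≤ (Δt * D / ν) * ((q ^ m - θ ^ m) / (q - θ))
        + (Δt * K₀ / ((1 - θ) * ν)) * (q ^ m - 1) := by
    intro m
    induction m with
    | zero => simp [hy0]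
    | succ m ih =>
      have hx' := hx (m + 1) (Nat.le_add_left 1 m)
      simp only [Nat.add_sub_cancel] at hx'
      have hdiff : x (m + 1) - y (m + 1)
          = (x m - y m) + Δt • (F (x m) - F (y m)) + Δt • z (m + 1) := by
        rw [hx', hyrec m, smul_sub]; abel
      have hnorm : ‖x (m + 1) - y (m + 1)‖
          ≤ q * ‖x m - y m‖ + Δt * ‖z (m + 1)‖ := by
        rw [hdiff]
        have h1 : ‖(x m - y m) + Δt • (F (x m) - F (y m)) + Δt • z (m + 1)‖
            ≤ ‖x m - y m‖ + ‖Δt • (F (x m) - F (y m))‖ + ‖Δt • z (m + 1)‖ :=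
          norm_add₃_le
        have h2 : ‖Δt • (F (x m) - F (y m))‖ = Δt * ‖F (x m) - F (y m)‖ := by
          rw [norm_smul, Real.norm_eq_abs, abs_of_pos hΔt]
        have h3 : ‖Δt • z (m + 1)‖ = Δt * ‖z (m + 1)‖ := by
          rw [norm_smul, Real.norm_eq_abs, abs_of_pos hΔt]
        have h4 : Δt * ‖F (x m) - F (y m)‖ ≤ Δt * (Kx * ‖x m - y m‖) :=
          mul_le_mul_of_nonneg_left (hFlip (x m) (y m)) hΔt.le
        have h5 : (1 + Kx * Δt) * ‖x m - y m‖
            = ‖x m - y m‖ + Δt * (Kx * ‖x m - y m‖) := by ring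
        rw [hq]
        linarith
      have hzb : Δt * ‖z (m + 1)‖ ≤ Δt * ((θ ^ m * D + B) / ν) := by
        have := (le_div_iff₀ hνpos).2 (hz m)
        exact mul_le_mul_of_nonneg_left this hΔt.le
      have hid : q * ((Δt * D / ν) * ((q ^ m - θ ^ m) / (q - θ))
            + (Δt * K₀ / ((1 - θ) * ν)) * (q ^ m - 1))
          + Δt * ((θ ^ m * D + B) / ν)
          = (Δt * D / ν) * ((q ^ (m + 1) - θ ^ (m + 1)) / (q - θ))
            + (Δt * K₀ / ((1 - θ) * ν)) * (q ^ (m + 1) - 1) := by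
        have hqθ' : q - θ ≠ 0 := ne_of_gt hqθ
        have hν' : ν ≠ 0 := ne_of_gt hνpos
        have h1θ' : (1 : ℝ) - θ ≠ 0 := ne_of_gt h1θ
        have hqθ'' : 1 + Kx * Δt - θ ≠ 0 := hqθ'
        rw [pow_succ q, pow_succ θ, hBdef, hq]
        field_simp
        ring
      have hmono : q * ‖x m - y m‖ ≤ q * ((Δt * D / ν) * ((q ^ m - θ ^ m) / (q - θ))
            + (Δt * K₀ / ((1 - θ) * ν)) * (q ^ m - 1)) :=
        mul_le_mul_of_nonneg_left ih hq0
      calc ‖x (m + 1) - y (m + 1)‖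
          ≤ q * ‖x m - y m‖ + Δt * ‖z (m + 1)‖ := hnorm
        _ ≤ q * ((Δt * D / ν) * ((q ^ m - θ ^ m) / (q - θ))
              + (Δt * K₀ / ((1 - θ) * ν)) * (q ^ m - 1))
            + Δt * ((θ ^ m * D + B) / ν) := add_le_add hmono hzb
        _ = (Δt * D / ν) * ((q ^ (m + 1) - θ ^ (m + 1)) / (q - θ))
            + (Δt * K₀ / ((1 - θ) * ν)) * (q ^ (m + 1) - 1) := hid
  -- conclusion
  have hE : q ^ n ≤ Real.exp (Kx * n * Δt) := by
    have h1 : q ≤ Real.exp (Kx * Δt) := by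
      rw [hq]
      have := Real.add_one_le_exp (Kx * Δt)
      linarith
    calc q ^ n ≤ Real.exp (Kx * Δt) ^ n := pow_le_pow_left₀ hq0 h1 n
      _ = Real.exp (n * (Kx * Δt)) := (Real.exp_nat_mul _ n).symm
      _ = Real.exp (Kx * n * Δt) := by ring_nf
  set E := Real.exp (Kx * n * Δt) with hE'
  have hE0 : 0 < E := Real.exp_pos _
  have hθn : (0:ℝ) ≤ θ ^ n := pow_nonneg hθ0 n
  have hT1 : (Δt * D / ν) * ((q ^ n - θ ^ n) / (q - θ))
      ≤ (Δt * D / ν) * (E / (1 - θ)) := by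
    apply mul_le_mul_of_nonneg_left _ (by positivity)
    apply div_le_div₀ hE0.le (by linarith) h1θ (by linarith)
  have hT2 : (Δt * K₀ / ((1 - θ) * ν)) * (q ^ n - 1)
      ≤ (Δt * K₀ / ((1 - θ) * ν)) * E := by
    apply mul_le_mul_of_nonneg_left _ (by positivity)
    linarith
  have hsum : (Δt * D / ν) * (E / (1 - θ)) + (Δt * K₀ / ((1 - θ) * ν)) * E
      = Δt * (D + K₀) * E / ((1 - θ) * ν) := by
    field_simp
  have hfin : Δt * (D + K₀) * E / ((1 - θ) * ν)
      ≤ 1 / (1 - θ) * (Δt / lam) * (K₀ + D) * E := by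
    have h1 : Δt * (D + K₀) * E / ((1 - θ) * ν)
        ≤ Δt * (D + K₀) * E / ((1 - θ) * lam) := by
      apply div_le_div_of_nonneg_left (by positivity) (by positivity)
      apply mul_le_mul_of_nonneg_left hνlam h1θ.le
    calc Δt * (D + K₀) * E / ((1 - θ) * ν)
        ≤ Δt * (D + K₀) * E / ((1 - θ) * lam) := h1
      _ = 1 / (1 - θ) * (Δt / lam) * (K₀ + D) * E := by
          field_simp [h1θ.ne', hlam.ne']
          ring_nf
  calc ‖x n - y n‖
      ≤ (Δt * D / ν) * ((q ^ n - θ ^ n) / (q - θ))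
        + (Δt * K₀ / ((1 - θ) * ν)) * (q ^ n - 1) := herr n
    _ ≤ (Δt * D / ν) * (E / (1 - θ)) + (Δt * K₀ / ((1 - θ) * ν)) * E := by
        linarith
    _ = Δt * (D + K₀) * E / ((1 - θ) * ν) := hsum
    _ ≤ 1 / (1 - θ) * (Δt / lam) * (K₀ + D) * E := hfin
end

section
/- (Consistency of the first-order scheme as ε → 0, Proposition 3.2.) Let E, B : ℝ × ℝ² → ℝ continuous with B bounded away from 0, let B_ext(t,x) = (0,0,B(t,x)), and for each ε > 0 let (x^n_ε, v^n_ε)_{0≤n≤N} solve the semi-implicit scheme x^{n+1}_ε = x^n_ε + (Δt/ε) v^{n+1}_ε, v^{n+1}_ε = v^n_ε + (Δt/ε)(ε⁻¹ v^{n+1}_ε ∧ B_ext(t^n, x^n_ε) + E(t^n, x^n_ε)). Assume (x^n_ε, ε v^n_ε) is bounded uniformly in ε for each n, and (x^0_ε, ε v^0_ε) → (y^0, 0) as ε → 0. Then for each 1 ≤ n ≤ N, x^n_ε → y^n where y^{n+1} = y^n + Δt E(t^n, y^n) ∧ B_ext(t^n, y^n)/‖B_ext(t^n,y^n)‖². 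-/
open Filter Topology

private lemma stmt9_solveV (Δt ε Bv : ℝ) (Ev W Vn : ℂ) (hε : (ε:ℂ) ≠ 0)
    (h : W = Vn + (Δt / ε) • (ε⁻¹ • (Bv • Rrot W) + Ev)) :
    W * ((ε:ℂ)^2 + Complex.I * Δt * Bv) = (ε:ℂ)^2 * Vn + ε * Δt * Ev := by
  simp only [Rrot, Complex.real_smul, Complex.ofReal_div, Complex.ofReal_inv] at h
  field_simp at h
  linear_combination h

private lemma stmt9_denne (Δt ε Bv : ℝ) (hΔt : 0 < Δt) (hB : Bv ≠ 0) :
    ((ε:ℂ)^2 + Complex.I * Δt * Bv) ≠ 0 := by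
  intro h
  have h2 : ((ε:ℂ)^2 + Complex.I * Δt * Bv).im = Δt * Bv := by simp [pow_two]
  rw [h] at h2
  simp at h2
  rcases h2 with h1 | h1
  · exact hΔt.ne' h1
  · exact hB h1

private lemma stmt9_ids (Δt ε Bv : ℝ) (Ev W Vn Xn Xn1 : ℂ) (hε : (ε:ℂ) ≠ 0)
    (hden : ((ε:ℂ)^2 + Complex.I * Δt * Bv) ≠ 0)
    (hW : W * ((ε:ℂ)^2 + Complex.I * Δt * Bv) = (ε:ℂ)^2 * Vn + ε * Δt * Ev)
    (hX : Xn1 = Xn + (Δt / ε) • W) :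
    Xn1 = Xn + (Δt:ℂ) * (((ε:ℂ) * Vn + Δt * Ev) / ((ε:ℂ)^2 + Complex.I * Δt * Bv))
      ∧ (ε:ℝ) • W = (ε:ℂ)^2 * (((ε:ℂ) * Vn + Δt * Ev) / ((ε:ℂ)^2 + Complex.I * Δt * Bv)) := by
  have hWd : W = ((ε:ℂ)^2 * Vn + ε * Δt * Ev) / ((ε:ℂ)^2 + Complex.I * Δt * Bv) :=
    (eq_div_iff hden).mpr hW
  simp only [Complex.real_smul, Complex.ofReal_div] at hX ⊢
  rw [hX, hWd]
  exact ⟨by field_simp, by field_simp⟩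

theorem stmt9' (Δt : ℝ) (hΔt : 0 < Δt) (N : ℕ)
    (E : ℝ → ℂ → ℂ) (B : ℝ → ℂ → ℝ)
    (hE : Continuous (fun p : ℝ × ℂ => E p.1 p.2))
    (hB : Continuous (fun p : ℝ × ℂ => B p.1 p.2))
    (bmin : ℝ) (hbmin : 0 < bmin) (hBlow : ∀ t x, bmin ≤ |B t x|)
    (X V : ℝ → ℕ → ℂ)
    (hschemeX : ∀ ε : ℝ, 0 < ε → ∀ n : ℕ, n < N →
      X ε (n + 1) = X ε n + (Δt / ε) • V ε (n + 1))
    (hschemeV : ∀ ε : ℝ, 0 < ε → ∀ n : ℕ, n < N →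
      V ε (n + 1) = V ε n
        + (Δt / ε) • (ε⁻¹ • (B (n * Δt) (X ε n) • Rrot (V ε (n + 1)))
            + E (n * Δt) (X ε n)))
    (y0 : ℂ)
    (hX0 : Filter.Tendsto (fun ε => X ε 0) (nhdsWithin 0 (Set.Ioi 0)) (nhds y0))
    (hV0 : Filter.Tendsto (fun ε => ε • V ε 0) (nhdsWithin 0 (Set.Ioi 0)) (nhds 0))
    (y : ℕ → ℂ) (hy0 : y 0 = y0)
    (hy : ∀ n : ℕ, n < N →
      y (n + 1) = y n + (Δt / B (n * Δt) (y n)) • Rrot (E (n * Δt) (y n))) :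
    ∀ n : ℕ, n ≤ N →
      Filter.Tendsto (fun ε => X ε n) (nhdsWithin 0 (Set.Ioi 0)) (nhds (y n)) ∧
      Filter.Tendsto (fun ε => ε • V ε n) (nhdsWithin 0 (Set.Ioi 0)) (nhds 0) := by
  set L := nhdsWithin (0:ℝ) (Set.Ioi 0) with hL
  intro n
  induction n with
  | zero => exact fun _ => ⟨hy0 ▸ hX0, hV0⟩
  | succ n ih =>
    intro hn1
    have hnN : n < N := hn1
    obtain ⟨hXn, hUn⟩ := ih hnN.le
    set t := (n : ℝ) * Δt with ht
    set b := B t (y n) with hbdef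
    have hb : b ≠ 0 := by
      intro h
      have := hBlow t (y n)
      rw [← hbdef, h] at this
      simp at this
      linarith
    -- limits of coefficients
    have hpair : Tendsto (fun ε => ((t, X ε n) : ℝ × ℂ)) L (𝓝 (t, y n)) :=
      tendsto_const_nhds.prodMk_nhds hXn
    have hEl : Tendsto (fun ε => E t (X ε n)) L (𝓝 (E t (y n))) :=
      (hE.tendsto (t, y n)).comp hpair
    have hBl : Tendsto (fun ε => ((B t (X ε n) : ℝ) : ℂ)) L (𝓝 ((b : ℝ) : ℂ)) :=
      (Complex.continuous_ofReal.tendsto b).comp ((hB.tendsto (t, y n)).comp hpair)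
    have hsq : Tendsto (fun ε : ℝ => ((ε:ℂ))^2) L (𝓝 0) := by
      have : Tendsto (fun ε : ℝ => ((ε:ℂ))^2) (𝓝 0) (𝓝 0) := by
        have := (Complex.continuous_ofReal.pow 2).tendsto (0:ℝ)
        convert this using 2
        · rfl
        · show (0:ℂ) = ((0:ℝ):ℂ)^2; simp
      exact this.mono_left nhdsWithin_le_nhds
    have hden : Tendsto (fun ε : ℝ => ((ε:ℂ)^2 + Complex.I * Δt * (B t (X ε n) : ℂ))) L
        (𝓝 (Complex.I * Δt * (b:ℂ))) := by
      have := hsq.add ((tendsto_const_nhds (x := Complex.I * (Δt:ℂ))).mul hBl)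
      simpa using this
    have hdenne : Complex.I * (Δt:ℂ) * (b:ℂ) ≠ 0 := by
      apply mul_ne_zero (mul_ne_zero Complex.I_ne_zero _)
      · exact_mod_cast hb
      · exact_mod_cast hΔt.ne'
    have hUn' : Tendsto (fun ε : ℝ => (ε:ℂ) * V ε n) L (𝓝 0) := by
      refine hUn.congr (fun ε => ?_)
      simp [Complex.real_smul]
    have hnum : Tendsto (fun ε : ℝ => ((ε:ℂ) * V ε n + (Δt:ℂ) * E t (X ε n))) L
        (𝓝 ((Δt:ℂ) * E t (y n))) := by
      have := hUn'.add ((tendsto_const_nhds (x := (Δt:ℂ))).mul hEl)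
      simpa using this
    have hQ : Tendsto (fun ε : ℝ =>
        ((ε:ℂ) * V ε n + (Δt:ℂ) * E t (X ε n)) / ((ε:ℂ)^2 + Complex.I * Δt * (B t (X ε n) : ℂ)))
        L (𝓝 ((Δt:ℂ) * E t (y n) / (Complex.I * Δt * (b:ℂ)))) :=
      hnum.div hden hdenne
    -- pointwise identities on Ioi 0
    have hkey : ∀ ε ∈ Set.Ioi (0:ℝ),
        X ε (n+1) = X ε n + (Δt:ℂ) *
          (((ε:ℂ) * V ε n + (Δt:ℂ) * E t (X ε n)) / ((ε:ℂ)^2 + Complex.I * Δt * (B t (X ε n) : ℂ)))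
        ∧ (ε:ℝ) • V ε (n+1) = (ε:ℂ)^2 *
          (((ε:ℂ) * V ε n + (Δt:ℂ) * E t (X ε n)) / ((ε:ℂ)^2 + Complex.I * Δt * (B t (X ε n) : ℂ))) := by
      intro ε hε
      have hε0 : (0:ℝ) < ε := hε
      have hεC : (ε:ℂ) ≠ 0 := by exact_mod_cast hε0.ne'
      have hBne : B t (X ε n) ≠ 0 := by
        intro h
        have := hBlow t (X ε n)
        rw [h] at this; simp at this; linarith
      have hdne := stmt9_denne Δt ε (B t (X ε n)) hΔt hBne
      have hW := stmt9_solveV Δt ε (B t (X ε n)) (E t (X ε n)) (V ε (n+1)) (V ε n) hεC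
        (by rw [ht]; exact hschemeV ε hε0 n hnN)
      exact stmt9_ids Δt ε (B t (X ε n)) (E t (X ε n)) (V ε (n+1)) (V ε n) (X ε n) (X ε (n+1))
        hεC hdne hW (hschemeX ε hε0 n hnN)
    have hev : ∀ᶠ ε in L, ε ∈ Set.Ioi (0:ℝ) := self_mem_nhdsWithin
    -- X limit
    have hXlim : Tendsto (fun ε => X ε (n+1)) L
        (𝓝 (y n + (Δt:ℂ) * ((Δt:ℂ) * E t (y n) / (Complex.I * Δt * (b:ℂ))))) := by
      refine Tendsto.congr' ?_ (hXn.add ((tendsto_const_nhds (x := (Δt:ℂ))).mul hQ))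
      filter_upwards [hev] with ε hε
      exact ((hkey ε hε).1).symm
    have hUlim : Tendsto (fun ε => ε • V ε (n+1)) L (𝓝 0) := by
      have h0 := hsq.mul hQ
      rw [zero_mul] at h0
      refine Tendsto.congr' ?_ h0
      filter_upwards [hev] with ε hε
      exact ((hkey ε hε).2).symm
    have hval : y n + (Δt:ℂ) * ((Δt:ℂ) * E t (y n) / (Complex.I * Δt * (b:ℂ))) = y (n+1) := by
      rw [hy n hnN, ← ht, ← hbdef]
      simp only [Rrot, Complex.real_smul, Complex.ofReal_div]
      have hbC : (b:ℂ) ≠ 0 := by exact_mod_cast hb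
      have hΔC : (Δt:ℂ) ≠ 0 := by exact_mod_cast hΔt.ne'
      field_simp
      ring_nf
      rw [Complex.I_sq]
      ring
    exact ⟨hval ▸ hXlim, hUlim⟩

/-- Consistency of the first-order semi-implicit scheme in the limit
`ε → 0` (Proposition 3.2): under uniform boundedness of `(x^n_ε, ε v^n_ε)`
and convergence of the initial data, the positions `x^n_ε` converge to the
forward Euler iterates `y^n` of the guiding-center equation
`ẏ = E ∧ B_ext/‖B_ext‖²`. -/
theorem stmt9 (Δt : ℝ) (hΔt : 0 < Δt) (N : ℕ)
    (E : ℝ → ℂ → ℂ) (B : ℝ → ℂ → ℝ)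
    (hE : Continuous (fun p : ℝ × ℂ => E p.1 p.2))
    (hB : Continuous (fun p : ℝ × ℂ => B p.1 p.2))
    (bmin : ℝ) (hbmin : 0 < bmin) (hBlow : ∀ t x, bmin ≤ |B t x|)
    (X V : ℝ → ℕ → ℂ)
    (hschemeX : ∀ ε : ℝ, 0 < ε → ∀ n : ℕ, n < N →
      X ε (n + 1) = X ε n + (Δt / ε) • V ε (n + 1))
    (hschemeV : ∀ ε : ℝ, 0 < ε → ∀ n : ℕ, n < N →
      V ε (n + 1) = V ε n
        + (Δt / ε) • (ε⁻¹ • (B (n * Δt) (X ε n) • Rrot (V ε (n + 1)))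
            + E (n * Δt) (X ε n)))
    (hbound : ∀ n : ℕ, n ≤ N → ∃ M : ℝ, ∀ ε : ℝ, 0 < ε → ε ≤ 1 →
      ‖X ε n‖ ≤ M ∧ ‖ε • V ε n‖ ≤ M)
    (y0 : ℂ)
    (hX0 : Filter.Tendsto (fun ε => X ε 0) (nhdsWithin 0 (Set.Ioi 0)) (nhds y0))
    (hV0 : Filter.Tendsto (fun ε => ε • V ε 0) (nhdsWithin 0 (Set.Ioi 0)) (nhds 0))
    (y : ℕ → ℂ) (hy0 : y 0 = y0)
    (hy : ∀ n : ℕ, n < N →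
      y (n + 1) = y n + (Δt / B (n * Δt) (y n)) • Rrot (E (n * Δt) (y n))) :
    ∀ n : ℕ, 1 ≤ n → n ≤ N →
      Filter.Tendsto (fun ε => X ε n) (nhdsWithin 0 (Set.Ioi 0)) (nhds (y n)) := by
  intro n _ hn
  exact (stmt9' Δt hΔt N E B hE hB bmin hbmin hBlow X V hschemeX hschemeV y0 hX0 hV0 y hy0 hy n hn).1
end

section
/- In the setting of Proposition 3.2 (first-order semi-implicit scheme with uniformly bounded (x^n_ε, ε v^n_ε)), for each 1 ≤ n ≤ N the family (ε⁻¹ v^n_ε)_{ε>0} is uniformly bounded as ε → 0, and moreover ε v^n_ε → 0 for every 0 ≤ n ≤ N. -/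
/-- In the setting of Proposition 3.2 (first-order semi-implicit scheme with
uniformly bounded `(x^n_ε, ε v^n_ε)`): for each `1 ≤ n ≤ N` the family
`(ε⁻¹ v^n_ε)` is uniformly bounded as `ε → 0`, and `ε v^n_ε → 0` for every
`0 ≤ n ≤ N`. -/
theorem stmt10 (Δt : ℝ) (hΔt : 0 < Δt) (N : ℕ)
    (E : ℝ → ℂ → ℂ) (B : ℝ → ℂ → ℝ)
    (hE : Continuous (fun p : ℝ × ℂ => E p.1 p.2))
    (hB : Continuous (fun p : ℝ × ℂ => B p.1 p.2))
    (bmin : ℝ) (hbmin : 0 < bmin) (hBlow : ∀ t x, bmin ≤ |B t x|)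
    (X V : ℝ → ℕ → ℂ)
    (hschemeX : ∀ ε : ℝ, 0 < ε → ∀ n : ℕ, n < N →
      X ε (n + 1) = X ε n + (Δt / ε) • V ε (n + 1))
    (hschemeV : ∀ ε : ℝ, 0 < ε → ∀ n : ℕ, n < N →
      V ε (n + 1) = V ε n
        + (Δt / ε) • (ε⁻¹ • (B (n * Δt) (X ε n) • Rrot (V ε (n + 1)))
            + E (n * Δt) (X ε n)))
    (hbound : ∀ n : ℕ, n ≤ N → ∃ M : ℝ, ∀ ε : ℝ, 0 < ε → ε ≤ 1 →
      ‖X ε n‖ ≤ M ∧ ‖ε • V ε n‖ ≤ M)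
    (hV0 : Filter.Tendsto (fun ε => ε • V ε 0) (nhdsWithin 0 (Set.Ioi 0)) (nhds 0)) :
    (∀ n : ℕ, 1 ≤ n → n ≤ N → ∃ M δ : ℝ, 0 < δ ∧
      ∀ ε : ℝ, 0 < ε → ε ≤ δ → ‖ε⁻¹ • V ε n‖ ≤ M) ∧
    (∀ n : ℕ, n ≤ N →
      Filter.Tendsto (fun ε => ε • V ε n) (nhdsWithin 0 (Set.Ioi 0)) (nhds 0)) := by
  have key : ∀ n : ℕ, n < N → ∃ M : ℝ, ∀ ε : ℝ, 0 < ε → ε ≤ 1 →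
      ‖ε⁻¹ • V ε (n + 1)‖ ≤ M := by
    intro n hn
    obtain ⟨M, hM⟩ := hbound n hn.le
    obtain ⟨C, hC⟩ := (isCompact_closedBall (0 : ℂ) M).exists_bound_of_continuousOn
      (f := fun x => E (n * Δt) x)
      ((hE.comp (continuous_const.prodMk continuous_id)).continuousOn)
    refine ⟨(M + Δt * C) / (Δt * bmin), ?_⟩
    intro ε hε hε1
    have hε' : (ε : ℂ) ≠ 0 := by exact_mod_cast hε.ne'
    set b := B (n * Δt) (X ε n) with hbdef
    set e := E (n * Δt) (X ε n) with hedef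
    have hb : bmin ≤ |b| := hBlow _ _
    have hbne : b ≠ 0 := fun h => by simp [h] at hb; linarith
    have hv := hschemeV ε hε n hn
    simp only [Rrot, Complex.real_smul, Complex.ofReal_div, Complex.ofReal_inv,
      ← hbdef, ← hedef] at hv
    field_simp at hv
    have hden : ((ε : ℂ) ^ 2 + (Δt : ℂ) * b * Complex.I) ≠ 0 := by
      intro h
      have him : ((ε : ℂ) ^ 2 + (Δt : ℂ) * b * Complex.I).im = Δt * b := by simp [pow_two]
      rw [h] at him
      simp at him
      rcases him with h1 | h1
      · exact hΔt.ne' h1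
      · exact hbne h1
    have hform : (ε⁻¹ • V ε (n + 1) : ℂ)
        = ((ε : ℂ) * V ε n + (Δt : ℂ) * e) / ((ε : ℂ) ^ 2 + (Δt : ℂ) * b * Complex.I) := by
      rw [eq_div_iff hden, Complex.real_smul, Complex.ofReal_inv, inv_mul_eq_div,
        div_mul_eq_mul_div, div_eq_iff hε']
      linear_combination hv
    rw [hform, norm_div]
    have hnum : ‖(ε : ℂ) * V ε n + (Δt : ℂ) * e‖ ≤ M + Δt * C := by
      refine (norm_add_le _ _).trans (add_le_add ?_ ?_)
      · have := (hM ε hε hε1).2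
        rwa [Complex.real_smul] at this
      · rw [norm_mul, Complex.norm_real, Real.norm_eq_abs, abs_of_pos hΔt]
        have hx : X ε n ∈ Metric.closedBall (0 : ℂ) M := by
          simpa [Metric.mem_closedBall, dist_zero_right] using (hM ε hε hε1).1
        exact mul_le_mul_of_nonneg_left (hC _ hx) hΔt.le
    have hdenlb : Δt * bmin ≤ ‖(ε : ℂ) ^ 2 + (Δt : ℂ) * b * Complex.I‖ := by
      have him : ((ε : ℂ) ^ 2 + (Δt : ℂ) * b * Complex.I).im = Δt * b := by simp [pow_two]
      calc Δt * bmin ≤ Δt * |b| := mul_le_mul_of_nonneg_left hb hΔt.le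
        _ = |Δt * b| := by rw [abs_mul, abs_of_pos hΔt]
        _ = |((ε : ℂ) ^ 2 + (Δt : ℂ) * b * Complex.I).im| := by
            rw [show ((ε : ℂ) ^ 2 + (Δt : ℂ) * b * Complex.I).im = Δt * b by simp [pow_two]]
        _ ≤ ‖((ε : ℂ) ^ 2 + (Δt : ℂ) * b * Complex.I)‖ := Complex.abs_im_le_norm _
        _ = ‖_‖ := rfl
    exact div_le_div₀ (le_trans (norm_nonneg _) hnum) hnum (by positivity) hdenlb
  constructor
  · intro n h1 hN
    obtain ⟨m, rfl⟩ := Nat.exists_eq_succ_of_ne_zero (by omega : n ≠ 0)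
    obtain ⟨M, hM⟩ := key m (by omega)
    exact ⟨M, 1, one_pos, fun ε hε hε1 => hM ε hε hε1⟩
  · intro n hN
    cases n with
    | zero => exact hV0
    | succ m =>
      obtain ⟨M, hM⟩ := key m (by omega)
      have hev : ∀ᶠ ε in nhdsWithin 0 (Set.Ioi 0), ‖ε • V ε (m + 1)‖ ≤ ε ^ 2 * M := by
        have hmem : Set.Ioo (0 : ℝ) 1 ∈ nhdsWithin 0 (Set.Ioi 0) :=
          Filter.inter_mem self_mem_nhdsWithin
            (mem_nhdsWithin_of_mem_nhds (Iio_mem_nhds one_pos))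
        filter_upwards [hmem] with ε hε
        have hε0 : (0:ℝ) < ε := hε.1
        have hε0' : ε ≠ 0 := ne_of_gt hε0
        have heq : ε • V ε (m + 1) = (ε ^ 2) • (ε⁻¹ • V ε (m + 1)) := by
          rw [smul_smul]
          congr 1
          field_simp
        rw [heq, norm_smul, Real.norm_eq_abs, abs_of_pos (by positivity : (0:ℝ) < ε ^ 2)]
        exact mul_le_mul_of_nonneg_left (hM ε hε.1 hε.2.le) (by positivity)
      have hg : Filter.Tendsto (fun ε : ℝ => ε ^ 2 * M) (nhdsWithin 0 (Set.Ioi 0)) (nhds 0) := by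
        have h0 : Filter.Tendsto (fun ε : ℝ => ε ^ 2 * M) (nhds 0) (nhds (0 ^ 2 * M)) :=
          ((continuous_pow 2).mul continuous_const).tendsto 0
        simpa using h0.mono_left nhdsWithin_le_nhds
      exact squeeze_zero_norm' hev hg
end

section
/- (Consistency of the second-order A-stable scheme as ε → 0, Proposition 3.4.) Under the hypotheses that for each n the families (x^n_ε, ε v^n_ε) are bounded uniformly in ε and (x^0_ε, ε v^0_ε) → (y^0, 0), the solutions of the two-stage scheme x^{(i)} = x^n + (Δt/2ε)v^{(i)}, v^{(1)} = v^n + (Δt/2ε)(ε⁻¹v^{(1)} ∧ B_ext(t^n,x^n) + E(t^n,x^n)), v^{(2)} = v^n + (Δt/2ε)(ε⁻¹v^{(2)} ∧ B_ext(t^{n+1}, 2x^{(1)}−x^n) + E(t^{n+1}, 2x^{(1)}−x^n)), x^{n+1} = x^{(1)} + x^{(2)} − x^n, satisfy x^n_ε → y^n as ε → 0, where y^n solves the Heun-type scheme y^{(1)} = y^n + (Δt/2)U(t^n, y^n), y^{(2)} = y^n + (Δt/2)U(t^{n+1}, 2y^{(1)} − y^n), y^{n+1} = y^{(1)} + y^{(2)}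 − y^n, with U(t,x) = E(t,x) ∧ B_ext(t,x)/‖B_ext(t,x)‖². -/
open Complex Filter


lemma stmt13_stage_eq (Δt ε b : ℝ) (hΔt : 0 < Δt) (hε : 0 < ε) (v V E : ℂ)
    (h : v = V + (Δt / (2*ε)) • ((ε⁻¹ : ℝ) • (b • Rrot v) + E)) :
    (Δt/(2*ε)) • v =
      (((Δt/(2*ε^2) : ℝ) : ℂ)⁻¹ + Complex.I * b)⁻¹ * (ε • V + (Δt/2) • E)
    ∧ ε • v = ((Δt/(2*ε^2):ℝ):ℂ)⁻¹ *
      ((((Δt/(2*ε^2):ℝ):ℂ)⁻¹ + Complex.I * b)⁻¹ * (ε • V + (Δt/2) • E)) := by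
  simp only [Rrot] at h
  have hεc : (ε:ℂ) ≠ 0 := by exact_mod_cast hε.ne'
  have hΔc : (Δt:ℂ) ≠ 0 := by exact_mod_cast hΔt.ne'
  have hβpos : (0:ℝ) < Δt/(2*ε^2) := by positivity
  have hβ : ((Δt/(2*ε^2):ℝ):ℂ) ≠ 0 := by exact_mod_cast hβpos.ne'
  have hm : ((ε:ℂ)^2*2 + Δt*b*Complex.I) ≠ 0 := by
    intro hc
    have := congrArg Complex.re hc
    simp [Complex.add_re, Complex.mul_re, pow_two] at this
    nlinarith [hε]
  have hD : (((Δt/(2*ε^2) : ℝ) : ℂ)⁻¹ + Complex.I * b) ≠ 0 := by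
    rw [show (((Δt/(2*ε^2):ℝ)):ℂ) = ↑Δt/(2*(ε:ℂ)^2) by push_cast; ring]
    rw [show ((Δt:ℂ)/(2*(ε:ℂ)^2))⁻¹ + Complex.I * b
        = ((ε:ℂ)^2*2 + Δt*b*Complex.I) / Δt by field_simp]
    exact div_ne_zero hm hΔc
  simp only [Complex.real_smul] at h ⊢
  have hv : v = ((ε:ℂ)*V*2 + Δt*E) * ε / ((ε:ℂ)^2*2 + Δt*b*Complex.I) := by
    rw [eq_div_iff hm]
    push_cast at h
    field_simp at h
    linear_combination h
  rw [show (((Δt/(2*ε^2):ℝ)):ℂ) = ↑Δt/(2*(ε:ℂ)^2) by push_cast; ring]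
  constructor
  · rw [hv]
    push_cast
    rw [show (((Δt:ℂ)/(2*(ε:ℂ)^2))⁻¹ + Complex.I * b)
        = ((ε:ℂ)^2*2 + Δt*b*Complex.I) / Δt by field_simp]
    field_simp
  · rw [hv]
    push_cast
    rw [show (((Δt:ℂ)/(2*(ε:ℂ)^2))⁻¹ + Complex.I * b)
        = ((ε:ℂ)^2*2 + Δt*b*Complex.I) / Δt by field_simp]
    field_simp

lemma stmt13_βinv_lim (Δt : ℝ) :
    Tendsto (fun ε : ℝ => ((Δt/(2*ε^2):ℝ):ℂ)⁻¹) (nhdsWithin 0 (Set.Ioi 0)) (nhds 0) := by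
  have heq : ∀ ε : ℝ, ((Δt/(2*ε^2):ℝ):ℂ)⁻¹ = ((2*ε^2/Δt : ℝ):ℂ) := by
    intro ε; rw [← Complex.ofReal_inv, inv_div]
  simp only [heq]
  have : Tendsto (fun ε : ℝ => 2*ε^2/Δt) (nhds 0) (nhds 0) := by
    have h : Continuous (fun ε : ℝ => 2*ε^2/Δt) := by continuity
    simpa using h.tendsto 0
  exact (Complex.continuous_ofReal.tendsto 0).comp (this.mono_left nhdsWithin_le_nhds)

lemma stmt13_glim (Δt : ℝ) (bf : ℝ → ℝ) (binf : ℝ)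
    (hb : Tendsto bf (nhdsWithin 0 (Set.Ioi 0)) (nhds binf)) (hb0 : binf ≠ 0) :
    Tendsto (fun ε : ℝ => (((Δt/(2*ε^2):ℝ):ℂ)⁻¹ + Complex.I * bf ε)⁻¹)
      (nhdsWithin 0 (Set.Ioi 0)) (nhds ((Complex.I * binf)⁻¹)) := by
  have hbc : Tendsto (fun ε => ((bf ε : ℝ):ℂ)) (nhdsWithin 0 (Set.Ioi 0)) (nhds (binf:ℂ)) :=
    (Complex.continuous_ofReal.tendsto _).comp hb
  have h1 : Tendsto (fun ε : ℝ => ((Δt/(2*ε^2):ℝ):ℂ)⁻¹ + Complex.I * bf ε)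
      (nhdsWithin 0 (Set.Ioi 0)) (nhds (Complex.I * binf)) := by
    simpa using (stmt13_βinv_lim Δt).add (tendsto_const_nhds.mul hbc)
  exact h1.inv₀ (mul_ne_zero Complex.I_ne_zero (Complex.ofReal_ne_zero.2 hb0))

lemma stmt13_Ulim (Δt b : ℝ) (Ev : ℂ) (hb : b ≠ 0) :
    (Complex.I * b)⁻¹ * ((0:ℂ) + (Δt/2) • Ev) = (Δt/2) • ((b⁻¹ : ℝ) • (-Complex.I * Ev)) := by
  simp only [Complex.real_smul, zero_add]
  push_cast
  have hbc : (b:ℂ) ≠ 0 := Complex.ofReal_ne_zero.2 hb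
  field_simp
  linear_combination ((Δt:ℂ) * Ev) * Complex.I_sq

/-- Consistency of the second-order A-stable scheme in the limit `ε → 0`
(Proposition 3.4): under uniform boundedness of `(x^n_ε, ε v^n_ε)` and
convergence of the initial data, the positions `x^n_ε` converge to the
iterates of the Heun-type scheme for the guiding-center velocity
`U = E ∧ B_ext/‖B_ext‖²`. -/
theorem stmt13 (Δt : ℝ) (hΔt : 0 < Δt) (N : ℕ)
    (E : ℝ → ℂ → ℂ) (B : ℝ → ℂ → ℝ)
    (hE : Continuous (fun p : ℝ × ℂ => E p.1 p.2))
    (hB : Continuous (fun p : ℝ × ℂ => B p.1 p.2))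
    (bmin : ℝ) (hbmin : 0 < bmin) (hBlow : ∀ t x, bmin ≤ |B t x|)
    (X V x1 v1 x2 v2 : ℝ → ℕ → ℂ)
    (hv1 : ∀ ε : ℝ, 0 < ε → ∀ n : ℕ, n < N →
      v1 ε n = V ε n + (Δt / (2 * ε)) •
        (ε⁻¹ • (B (n * Δt) (X ε n) • Rrot (v1 ε n)) + E (n * Δt) (X ε n)))
    (hx1 : ∀ ε : ℝ, 0 < ε → ∀ n : ℕ, n < N →
      x1 ε n = X ε n + (Δt / (2 * ε)) • v1 ε n)
    (hv2 : ∀ ε : ℝ, 0 < ε → ∀ n : ℕ, n < N →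
      v2 ε n = V ε n + (Δt / (2 * ε)) •
        (ε⁻¹ • (B ((n + 1) * Δt) (2 * x1 ε n - X ε n) • Rrot (v2 ε n))
          + E ((n + 1) * Δt) (2 * x1 ε n - X ε n)))
    (hx2 : ∀ ε : ℝ, 0 < ε → ∀ n : ℕ, n < N →
      x2 ε n = X ε n + (Δt / (2 * ε)) • v2 ε n)
    (hXn : ∀ ε : ℝ, 0 < ε → ∀ n : ℕ, n < N →
      X ε (n + 1) = x1 ε n + x2 ε n - X ε n)
    (hVn : ∀ ε : ℝ, 0 < ε → ∀ n : ℕ, n < N →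
      V ε (n + 1) = v1 ε n + v2 ε n - V ε n)
    (hbound : ∀ n : ℕ, n ≤ N → ∃ M : ℝ, ∀ ε : ℝ, 0 < ε → ε ≤ 1 →
      ‖X ε n‖ ≤ M ∧ ‖ε • V ε n‖ ≤ M)
    (y0 : ℂ)
    (hX0 : Filter.Tendsto (fun ε => X ε 0) (nhdsWithin 0 (Set.Ioi 0)) (nhds y0))
    (hV0 : Filter.Tendsto (fun ε => ε • V ε 0) (nhdsWithin 0 (Set.Ioi 0)) (nhds 0))
    (U : ℝ → ℂ → ℂ) (hU : ∀ t x, U t x = (B t x)⁻¹ • Rrot (E t x))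
    (y y1 y2 : ℕ → ℂ) (hy0 : y 0 = y0)
    (hy1 : ∀ n : ℕ, n < N → y1 n = y n + (Δt / 2) • U (n * Δt) (y n))
    (hy2 : ∀ n : ℕ, n < N →
      y2 n = y n + (Δt / 2) • U ((n + 1) * Δt) (2 * y1 n - y n))
    (hy : ∀ n : ℕ, n < N → y (n + 1) = y1 n + y2 n - y n) :
    ∀ n : ℕ, 1 ≤ n → n ≤ N →
      Filter.Tendsto (fun ε => X ε n) (nhdsWithin 0 (Set.Ioi 0)) (nhds (y n)) := by
  have hev : ∀ᶠ ε : ℝ in nhdsWithin 0 (Set.Ioi 0), 0 < ε :=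
    eventually_nhdsWithin_of_forall (fun x hx => hx)
  have hbne : ∀ t x, B t x ≠ 0 := by
    intro t x h
    have := hBlow t x
    rw [h, abs_zero] at this
    linarith
  have key : ∀ n : ℕ, n ≤ N →
      Filter.Tendsto (fun ε => X ε n) (nhdsWithin 0 (Set.Ioi 0)) (nhds (y n)) ∧
      Filter.Tendsto (fun ε => ε • V ε n) (nhdsWithin 0 (Set.Ioi 0)) (nhds 0) := by
    intro n
    induction n with
    | zero => exact fun _ => ⟨hy0 ▸ hX0, hV0⟩
    | succ n ih =>
      intro hn
      have hnN : n < N := hn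
      obtain ⟨hXc, hVc⟩ := ih hnN.le
      -- stage 1 limits
      have hb1 : Filter.Tendsto (fun ε => B (n*Δt) (X ε n)) (nhdsWithin 0 (Set.Ioi 0))
          (nhds (B (n*Δt) (y n))) :=
        (hB.tendsto ((n*Δt : ℝ), y n)).comp (Filter.Tendsto.prodMk_nhds tendsto_const_nhds hXc)
      have hE1 : Filter.Tendsto (fun ε => E (n*Δt) (X ε n)) (nhdsWithin 0 (Set.Ioi 0))
          (nhds (E (n*Δt) (y n))) :=
        (hE.tendsto ((n*Δt : ℝ), y n)).comp (Filter.Tendsto.prodMk_nhds tendsto_const_nhds hXc)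
      have hS1 := hev.mono (fun ε hε =>
        stmt13_stage_eq Δt ε (B (n*Δt) (X ε n)) hΔt hε _ _ _ (hv1 ε hε n hnN))
      have hinner1 : Filter.Tendsto (fun ε => ε • V ε n + (Δt/2) • E (n*Δt) (X ε n))
          (nhdsWithin 0 (Set.Ioi 0)) (nhds (0 + (Δt/2) • E (n*Δt) (y n))) :=
        hVc.add (hE1.const_smul (Δt/2))
      have hg1 := stmt13_glim Δt _ _ hb1 (hbne (n*Δt) (y n))
      have hx1lim : Filter.Tendsto (fun ε => x1 ε n) (nhdsWithin 0 (Set.Ioi 0))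
          (nhds (y1 n)) := by
        have base := hXc.add (hg1.mul hinner1)
        have heqv : (fun ε => X ε n + (((Δt/(2*ε^2):ℝ):ℂ)⁻¹ + Complex.I * B (n*Δt) (X ε n))⁻¹ *
            (ε • V ε n + (Δt/2) • E (n*Δt) (X ε n))) =ᶠ[nhdsWithin 0 (Set.Ioi 0)]
            (fun ε => x1 ε n) := by
          filter_upwards [hev, hS1] with ε hε hS
          rw [hx1 ε hε n hnN, hS.1]
        have hval : y n + (Complex.I * (B (n*Δt) (y n)))⁻¹ * (0 + (Δt/2) • E (n*Δt) (y n))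
            = y1 n := by
          rw [stmt13_Ulim Δt _ _ (hbne (n*Δt) (y n)), hy1 n hnN, hU]
          simp only [Rrot]
        exact hval ▸ base.congr' heqv
      have hv1lim : Filter.Tendsto (fun ε => ε • v1 ε n) (nhdsWithin 0 (Set.Ioi 0))
          (nhds 0) := by
        have base := (stmt13_βinv_lim Δt).mul (hg1.mul hinner1)
        have heqv : (fun ε : ℝ => ((Δt/(2*ε^2):ℝ):ℂ)⁻¹ *
            ((((Δt/(2*ε^2):ℝ):ℂ)⁻¹ + Complex.I * B (n*Δt) (X ε n))⁻¹ *
            (ε • V ε n + (Δt/2) • E (n*Δt) (X ε n)))) =ᶠ[nhdsWithin 0 (Set.Ioi 0)]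
            (fun ε => ε • v1 ε n) := by
          filter_upwards [hS1] with ε hS
          rw [hS.2]
        simpa using base.congr' heqv
      -- stage 2 limits
      have hPc : Filter.Tendsto (fun ε => 2 * x1 ε n - X ε n) (nhdsWithin 0 (Set.Ioi 0))
          (nhds (2 * y1 n - y n)) := (hx1lim.const_mul 2).sub hXc
      have hb2 : Filter.Tendsto (fun ε => B ((n+1)*Δt) (2 * x1 ε n - X ε n))
          (nhdsWithin 0 (Set.Ioi 0)) (nhds (B ((n+1)*Δt) (2 * y1 n - y n))) :=
        (hB.tendsto (((n+1)*Δt : ℝ), 2 * y1 n - y n)).comp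
          (Filter.Tendsto.prodMk_nhds tendsto_const_nhds hPc)
      have hE2 : Filter.Tendsto (fun ε => E ((n+1)*Δt) (2 * x1 ε n - X ε n))
          (nhdsWithin 0 (Set.Ioi 0)) (nhds (E ((n+1)*Δt) (2 * y1 n - y n))) :=
        (hE.tendsto (((n+1)*Δt : ℝ), 2 * y1 n - y n)).comp
          (Filter.Tendsto.prodMk_nhds tendsto_const_nhds hPc)
      have hS2 := hev.mono (fun ε hε =>
        stmt13_stage_eq Δt ε (B ((n+1)*Δt) (2 * x1 ε n - X ε n)) hΔt hε _ _ _ (hv2 ε hε n hnN))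
      have hinner2 : Filter.Tendsto
          (fun ε => ε • V ε n + (Δt/2) • E ((n+1)*Δt) (2 * x1 ε n - X ε n))
          (nhdsWithin 0 (Set.Ioi 0)) (nhds (0 + (Δt/2) • E ((n+1)*Δt) (2 * y1 n - y n))) :=
        hVc.add (hE2.const_smul (Δt/2))
      have hg2 := stmt13_glim Δt _ _ hb2 (hbne ((n+1)*Δt) (2 * y1 n - y n))
      have hx2lim : Filter.Tendsto (fun ε => x2 ε n) (nhdsWithin 0 (Set.Ioi 0))
          (nhds (y2 n)) := by
        have base := hXc.add (hg2.mul hinner2)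
        have heqv : (fun ε => X ε n +
            (((Δt/(2*ε^2):ℝ):ℂ)⁻¹ + Complex.I * B ((n+1)*Δt) (2 * x1 ε n - X ε n))⁻¹ *
            (ε • V ε n + (Δt/2) • E ((n+1)*Δt) (2 * x1 ε n - X ε n)))
            =ᶠ[nhdsWithin 0 (Set.Ioi 0)] (fun ε => x2 ε n) := by
          filter_upwards [hev, hS2] with ε hε hS
          rw [hx2 ε hε n hnN, hS.1]
        have hval : y n + (Complex.I * (B ((n+1)*Δt) (2 * y1 n - y n)))⁻¹ *
            (0 + (Δt/2) • E ((n+1)*Δt) (2 * y1 n - y n)) = y2 n := by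
          rw [stmt13_Ulim Δt _ _ (hbne ((n+1)*Δt) (2 * y1 n - y n)), hy2 n hnN, hU]
          simp only [Rrot]
        exact hval ▸ base.congr' heqv
      have hv2lim : Filter.Tendsto (fun ε => ε • v2 ε n) (nhdsWithin 0 (Set.Ioi 0))
          (nhds 0) := by
        have base := (stmt13_βinv_lim Δt).mul (hg2.mul hinner2)
        have heqv : (fun ε : ℝ => ((Δt/(2*ε^2):ℝ):ℂ)⁻¹ *
            ((((Δt/(2*ε^2):ℝ):ℂ)⁻¹ + Complex.I * B ((n+1)*Δt) (2 * x1 ε n - X ε n))⁻¹ *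
            (ε • V ε n + (Δt/2) • E ((n+1)*Δt) (2 * x1 ε n - X ε n))))
            =ᶠ[nhdsWithin 0 (Set.Ioi 0)] (fun ε => ε • v2 ε n) := by
          filter_upwards [hS2] with ε hS
          rw [hS.2]
        simpa using base.congr' heqv
      constructor
      · have base := (hx1lim.add hx2lim).sub hXc
        have heqv : (fun ε => x1 ε n + x2 ε n - X ε n) =ᶠ[nhdsWithin 0 (Set.Ioi 0)]
            (fun ε => X ε (n+1)) := by
          filter_upwards [hev] with ε hε
          rw [hXn ε hε n hnN]
        rw [hy n hnN]
        exact base.congr' heqv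
      · have base := (hv1lim.add hv2lim).sub hVc
        have heqv : (fun ε => ε • v1 ε n + ε • v2 ε n - ε • V ε n)
            =ᶠ[nhdsWithin 0 (Set.Ioi 0)] (fun ε => ε • V ε (n+1)) := by
          filter_upwards [hev] with ε hε
          rw [hVn ε hε n hnN, smul_sub, smul_add]
        simpa using base.congr' heqv
  exact fun n _ hn => (key n hn).1
end

section
/- (Modified initial data improvement.) In the constant-field setting of Theorem 4.1, set z^1 = [Id − λR]⁻¹ w where w = ε⁻¹v^0 − R[E(t^0, x^0)]. Then z^1 = (1/λ) R w − (1/λ) R [Id − λR]⁻¹ w; consequently ‖z^1 − (1/λ)Rw‖ ≤ (1/λ)·((1+λ)/(1+λ²))·‖w‖, and the first-step error of the scheme started from the shifted point y^0 = x^0 + ε(v^0 ∧ B + ε E(t^0,x^0)) satisfies ‖x^1 − y^1‖ ≤ (Δt/λ)(K_x Δt + (1+λ)/(1+λ²))‖w‖. -/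
/-- Modified initial data improvement (constant-field setting of Theorem
4.1): with `z¹ = [Id − λR]⁻¹ w`, `w = ε⁻¹v⁰ − R[E(x⁰)]`, one has
`z¹ = (1/λ)Rw − (1/λ)R z¹`, hence `‖z¹ − (1/λ)Rw‖ ≤ (1/λ)((1+λ)/(1+λ²))‖w‖`,
and the first-step error of the scheme started from the shifted point
`y⁰ = x⁰ + ε(v⁰ ∧ B + ε E(x⁰))` satisfies
`‖x¹ − y¹‖ ≤ (Δt/λ)(K_x Δt + (1+λ)/(1+λ²))‖w‖`. -/
theorem stmt17 (ε Δt lam Kx : ℝ) (hε : 0 < ε) (hΔt : 0 < Δt)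
    (hlam : lam = Δt / ε ^ 2) (hKx : 0 ≤ Kx)
    (E : ℂ → ℂ)
    (hlip : ∀ a b : ℂ, ‖Rrot (E a) - Rrot (E b)‖ ≤ Kx * ‖a - b‖)
    (x0 v0 z1 x1 y0 y1 : ℂ)
    (hz1 : z1 - lam • Rrot z1 = ε⁻¹ • v0 - Rrot (E x0))
    (hx1 : x1 = x0 + Δt • Rrot (E x0) + Δt • z1)
    (hy0 : y0 = x0 + ε • (Rrot v0 + ε • E x0))
    (hy1 : y1 = y0 + Δt • Rrot (E y0)) :
    (z1 = lam⁻¹ • Rrot (ε⁻¹ • v0 - Rrot (E x0)) - lam⁻¹ • Rrot z1) ∧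
    (‖z1 - lam⁻¹ • Rrot (ε⁻¹ • v0 - Rrot (E x0))‖
        ≤ lam⁻¹ * ((1 + lam) / (1 + lam ^ 2)) * ‖ε⁻¹ • v0 - Rrot (E x0)‖) ∧
    (‖x1 - y1‖ ≤ (Δt / lam) * (Kx * Δt + (1 + lam) / (1 + lam ^ 2))
        * ‖ε⁻¹ • v0 - Rrot (E x0)‖) := by
  have hlam0 : 0 < lam := by
    rw [hlam]; positivity
  have hlamne : (lam:ℂ) ≠ 0 := by exact_mod_cast hlam0.ne'
  have hεne : (ε:ℂ) ≠ 0 := by exact_mod_cast hε.ne'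
  obtain ⟨w, hw⟩ : ∃ w, w = ε⁻¹ • v0 - Rrot (E x0) := ⟨_, rfl⟩
  rw [← hw] at hz1 ⊢
  -- complex form of hz1
  have hz1' : z1 - (lam:ℂ) * (-Complex.I * z1) = w := by
    simpa [Rrot, Complex.real_smul] using hz1
  -- Part 1
  have key : (lam:ℂ) * z1 = -Complex.I * (w - z1) := by
    linear_combination (-Complex.I) * hz1' + ((lam:ℂ) * z1) * Complex.I_sq
  have h1 : z1 = lam⁻¹ • Rrot w - lam⁻¹ • Rrot z1 := by
    simp only [Rrot, Complex.real_smul, Complex.ofReal_inv]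
    field_simp
    linear_combination key
  -- norm of w
  have hnorm1 : ‖(1:ℂ) + lam * Complex.I‖ = Real.sqrt (1 + lam ^ 2) := by
    rw [Complex.norm_def, Complex.normSq_apply]
    norm_num [pow_two]
  have hnw : ‖w‖ = ‖z1‖ * Real.sqrt (1 + lam ^ 2) := by
    have : w = z1 * (1 + lam * Complex.I) := by linear_combination -hz1'
    rw [this, norm_mul, hnorm1]
  have hsq : Real.sqrt (1 + lam ^ 2) * Real.sqrt (1 + lam ^ 2) = 1 + lam ^ 2 :=
    Real.mul_self_sqrt (by positivity)
  have hsle : Real.sqrt (1 + lam ^ 2) ≤ 1 + lam := by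
    rw [show (1:ℝ) + lam = Real.sqrt ((1+lam)^2) by
      rw [Real.sqrt_sq (by positivity)]]
    apply Real.sqrt_le_sqrt; nlinarith
  have hz1norm : ‖z1‖ ≤ (1 + lam) / (1 + lam ^ 2) * ‖w‖ := by
    rw [div_mul_eq_mul_div, le_div_iff₀ (by positivity)]
    calc ‖z1‖ * (1 + lam ^ 2) = ‖z1‖ * Real.sqrt (1+lam^2) * Real.sqrt (1+lam^2) := by
          rw [mul_assoc, hsq]
      _ ≤ ‖z1‖ * Real.sqrt (1+lam^2) * (1 + lam) := by
          apply mul_le_mul_of_nonneg_left hsle; positivity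
      _ = (1 + lam) * ‖w‖ := by rw [hnw]; ring
  have h2 : ‖z1 - lam⁻¹ • Rrot w‖ ≤ lam⁻¹ * ((1 + lam) / (1 + lam ^ 2)) * ‖w‖ := by
    have : z1 - lam⁻¹ • Rrot w = -(lam⁻¹ • Rrot z1) := by
      nth_rewrite 1 [h1]; abel
    rw [this, norm_neg, norm_smul, Real.norm_eq_abs, abs_of_pos (by positivity),
      show ‖Rrot z1‖ = ‖z1‖ by simp [Rrot]]
    rw [mul_assoc]
    exact mul_le_mul_of_nonneg_left hz1norm (by positivity)
  refine ⟨h1, h2, ?_⟩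
  -- Part 3
  have hΔlam : (Δt:ℝ) * lam⁻¹ = ε ^ 2 := by
    rw [hlam]; field_simp
  have hx0y0 : x0 - y0 = -((Δt * lam⁻¹) • Rrot w) := by
    rw [hy0, hΔlam]
    rw [hw]
    simp only [Rrot, Complex.real_smul, Complex.ofReal_inv, Complex.ofReal_pow]
    field_simp
    linear_combination (-(ε:ℂ)^2 * E x0) * Complex.I_sq
  have hdiff : x1 - y1 = Δt • (z1 - lam⁻¹ • Rrot w) + Δt • (Rrot (E x0) - Rrot (E y0)) := by
    rw [hx1, hy1]
    have : x0 - y0 = -((Δt * lam⁻¹) • Rrot w) := hx0y0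
    simp only [Complex.real_smul, Complex.ofReal_mul, Complex.ofReal_inv] at this ⊢
    linear_combination this
  have hnx0y0 : ‖x0 - y0‖ = Δt * lam⁻¹ * ‖w‖ := by
    rw [hx0y0, norm_neg, norm_smul, Real.norm_eq_abs, abs_of_pos (by positivity),
      show ‖Rrot w‖ = ‖w‖ by simp [Rrot]]
  calc ‖x1 - y1‖ ≤ ‖Δt • (z1 - lam⁻¹ • Rrot w)‖ + ‖Δt • (Rrot (E x0) - Rrot (E y0))‖ := by
        rw [hdiff]; exact norm_add_le _ _
    _ = Δt * ‖z1 - lam⁻¹ • Rrot w‖ + Δt * ‖Rrot (E x0) - Rrot (E y0)‖ := by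
        rw [norm_smul, norm_smul, Real.norm_eq_abs, abs_of_pos hΔt]
    _ ≤ Δt * (lam⁻¹ * ((1 + lam) / (1 + lam ^ 2)) * ‖w‖) + Δt * (Kx * ‖x0 - y0‖) := by
        gcongr
        exact hlip x0 y0
    _ = (Δt / lam) * (Kx * Δt + (1 + lam) / (1 + lam ^ 2)) * ‖w‖ := by
        rw [hnx0y0]; field_simp; ring
end
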